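/- Let a ∈ ℝ be irrational. Then there is no infinite subset A of ℕ such that for every positive element t of SIP(A) the fractional part of t·a lies in [0, 1/8); that is, the set {n ∈ ℕ : the fractional part of n·a lies in [0, 1/8)} is not an SIP set. -/

import Mathlib

/-- `IP A`: the set of all finite sums of distinct elements of `A ⊆ ℤ`
(sums over finite subsets `F ⊆ A`, with the empty sum equal to `0`). -/
def IP (A : Set ℤ) : Set ℤ :=
  {t | ∃ F : Finset ℤ, ↑F ⊆ A ∧ t = ∑ x ∈ F, x}

/-- `SIP A = IP A - IP A`. -/
def SIP (A : Set ℤ) : Set ℤ :=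
  {d | ∃ s ∈ IP A, ∃ t ∈ IP A, d = s - t}

/-- The positive part `S_+ = S ∩ ℕ` of a set of integers. -/
def posPart (S : Set ℤ) : Set ℤ := S ∩ {n : ℤ | 0 < n}

/-- `B` (a set of positive integers) is an SIP set: there is an infinite set
`A` of positive integers with `SIP(A)_+ ⊆ B`. -/
def IsSIPSet (B : Set ℤ) : Prop :=
  ∃ A : Set ℤ, A ⊆ {n : ℤ | 0 < n} ∧ A.Infinite ∧ posPart (SIP A) ⊆ B

/-- for irrational `a`, the set of positive integers `n` for which
the fractional part of `n·a` lies in `[0, 1/8)` is not an SIP set; equivalently,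
there is no infinite `A ⊆ ℕ` such that every positive element `t` of `SIP(A)`
has the fractional part of `t·a` in `[0, 1/8)`. -/
theorem not_isSIPSet_fract_lt (a : ℝ) (ha : Irrational a) :
    ¬ IsSIPSet {n : ℤ | 0 < n ∧ Int.fract ((n : ℝ) * a) < 1 / 8} := by
  rintro ⟨A, hApos, hAinf, hSIP⟩
  set β : ℤ → ℝ := fun x => Int.fract ((x : ℝ) * a) with hβ
  have hIPSIP : ∀ s ∈ IP A, s ∈ SIP A := by
    intro s hs
    exact ⟨s, hs, 0, ⟨∅, by simp, by simp⟩, by ring⟩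
  have hmem : ∀ x ∈ A, x ∈ IP A := fun x hx => ⟨{x}, by simpa, by simp⟩
  -- key bound on finite sums
  have hsum : ∀ F : Finset ℤ, ↑F ⊆ A →
      (∑ x ∈ F, β x) < 1/8 ∧ Int.fract ((↑(∑ x ∈ F, x) : ℝ) * a) = ∑ x ∈ F, β x := by
    intro F
    induction F using Finset.induction with
    | empty => intro _; norm_num
    | @insert x F' hx ih =>
      intro hFA
      have hxA : x ∈ A := hFA (by simp)
      have hF'A : ↑F' ⊆ A := fun y hy => hFA (by simp [hy])
      obtain ⟨ih1, ih2⟩ := ih hF'A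
      have hxpos : 0 < x := hApos hxA
      have hxfr : β x < 1/8 := (hSIP ⟨hIPSIP x (hmem x hxA), hxpos⟩).2
      have hβnn : 0 ≤ ∑ y ∈ F', β y := Finset.sum_nonneg fun y _ => Int.fract_nonneg _
      have hxnn : 0 ≤ β x := Int.fract_nonneg _
      have hsum_fract : Int.fract ((↑(∑ y ∈ insert x F', y) : ℝ) * a)
          = β x + ∑ y ∈ F', β y := by
        rw [Finset.sum_insert hx]
        have key : (↑(x + ∑ y ∈ F', y) : ℝ) * a
            = (↑(⌊(x:ℝ)*a⌋ + ⌊(↑(∑ y ∈ F', y):ℝ)*a⌋) : ℝ)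
              + (β x + Int.fract ((↑(∑ y ∈ F', y):ℝ)*a)) := by
          push_cast
          simp only [hβ, Int.fract]
          ring
        rw [key, Int.fract_intCast_add, ih2, Int.fract_eq_self.mpr]
        constructor
        · linarith
        · linarith
      rw [Finset.sum_insert hx, hsum_fract]
      refine ⟨?_, rfl⟩
      have hσpos : 0 < ∑ y ∈ insert x F', y :=
        Finset.sum_pos (fun y hy => hApos (hFA hy)) ⟨x, by simp⟩
      have hσIP : (∑ y ∈ insert x F', y) ∈ IP A := ⟨insert x F', hFA, rfl⟩
      have h8 := (hSIP ⟨hIPSIP _ hσIP, hσpos⟩).2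
      rw [hsum_fract] at h8
      exact h8
  -- β is positive on A
  have hβpos : ∀ x ∈ A, 0 < β x := by
    intro x hx
    have hx0 : (x : ℤ) ≠ 0 := ne_of_gt (hApos hx)
    have hirr : Irrational ((x:ℝ) * a) := ha.intCast_mul hx0
    have hne : Int.fract ((x:ℝ)*a) ≠ 0 := by
      intro h
      have h2 : (x:ℝ)*a = (⌊(x:ℝ)*a⌋ : ℝ) := by
        have := Int.fract ((x:ℝ)*a)
        rw [Int.fract] at h; linarith
      exact hirr.ne_int _ h2
    exact lt_of_le_of_ne (Int.fract_nonneg _) (Ne.symm hne)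
  -- pick x₀ ∈ A
  obtain ⟨x₀, hx₀A⟩ := hAinf.nonempty
  have hβx₀ : 0 < β x₀ := hβpos x₀ hx₀A
  have hβx₀8 : β x₀ < 1/8 := by
    have := (hsum {x₀} (by simpa)).1
    simpa using this
  -- the set of y ∈ A with β x₀ ≤ β y is finite
  have hSfin : {y ∈ A | β x₀ ≤ β y}.Finite := by
    by_contra hinf
    have hinf' : {y ∈ A | β x₀ ≤ β y}.Infinite := hinf
    obtain ⟨F, hFS, hFcard⟩ := hinf'.exists_subset_card_eq (⌈(1/8) / β x₀⌉₊ + 1)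
    have hFA : ↑F ⊆ A := fun y hy => (hFS hy).1
    have hlb : F.card • β x₀ ≤ ∑ y ∈ F, β y :=
      Finset.card_nsmul_le_sum F β (β x₀) (fun y hy => (hFS hy).2)
    have hlt := (hsum F hFA).1
    rw [hFcard] at hlb
    have hceil : (1/8) / β x₀ ≤ (⌈(1/8) / β x₀⌉₊ : ℝ) := Nat.le_ceil _
    have hgt : (1/8 : ℝ) < ((⌈(1/8) / β x₀⌉₊ + 1 : ℕ) : ℝ) * β x₀ := by
      have h1 : (1/8 : ℝ) = ((1/8) / β x₀) * β x₀ := by field_simp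
      push_cast
      nlinarith
    rw [nsmul_eq_mul] at hlb
    push_cast at hlb hgt
    linarith
  -- find y ∈ A with y > x₀ and β y < β x₀
  have hTinf : (A \ ({y ∈ A | β x₀ ≤ β y} ∪ Set.Ioc 0 x₀)).Infinite :=
    hAinf.diff (hSfin.union (Set.finite_Ioc 0 x₀))
  obtain ⟨y, hyA, hyN⟩ := hTinf.nonempty
  rw [Set.mem_union, not_or] at hyN
  obtain ⟨hyS, hyI⟩ := hyN
  have hβy : β y < β x₀ := by
    by_contra h
    exact hyS ⟨hyA, not_lt.mp h⟩
  have hygt : x₀ < y := by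
    have hy0 : 0 < y := hApos hyA
    by_contra h
    exact hyI ⟨hy0, not_lt.mp h⟩
  -- y - x₀ ∈ posPart (SIP A)
  have hd : (y - x₀) ∈ posPart (SIP A) :=
    ⟨⟨y, hmem y hyA, x₀, hmem x₀ hx₀A, rfl⟩, by simpa using hygt⟩
  have h8 := (hSIP hd).2
  have hβynn : 0 ≤ β y := Int.fract_nonneg _
  -- compute the fractional part of (y - x₀) * a
  have hfr : Int.fract ((↑(y - x₀) : ℝ) * a) = β y - β x₀ + 1 := by
    have key : (↑(y - x₀) : ℝ) * a
        = (↑(⌊(y:ℝ)*a⌋ - ⌊(x₀:ℝ)*a⌋ - 1) : ℝ) + (β y - β x₀ + 1) := by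
      push_cast
      simp only [hβ, Int.fract]
      ring
    rw [key, Int.fract_intCast_add, Int.fract_eq_self.mpr]
    constructor
    · linarith
    · linarith
  rw [hfr] at h8
  linarith
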